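/- Let p be prime, F a field, and K a division subring of M_p(F) properly containing the scalar matrices F·I. Then K = {c₀I + c₁A + ⋯ + c_{p-1}A^{p-1} : cᵢ ∈ F} for any A ∈ K that is not a scalar matrix; in particular, K is a commutative field of dimension p over F. -/

import Mathlib

open Polynomial Module
open scoped Matrix

/-- Let `p` be prime and `K` a division subring of `M_p(F)` properly containing the scalar
matrices.  Then for any non-scalar `A ∈ K`, one has
`K = {c₀I + c₁A + ⋯ + c_{p-1}A^{p-1} : cᵢ ∈ F}`; in particular `K` is commutative and has
dimension `p` over `F`. -/
theorem stmt_6 (p : ℕ) (hp : p.Prime) (F : Type*) [Field F]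
    (K : Subring (Matrix (Fin p) (Fin p) F))
    (hscalar : ∀ c : F, algebraMap F (Matrix (Fin p) (Fin p) F) c ∈ K)
    (hproper : ∃ B ∈ K, B ∉ Set.range (algebraMap F (Matrix (Fin p) (Fin p) F)))
    (hdiv : ∀ x ∈ K, x ≠ 0 → ∃ y ∈ K, x * y = 1 ∧ y * x = 1)
    (A : Matrix (Fin p) (Fin p) F) (hA : A ∈ K)
    (hAs : A ∉ Set.range (algebraMap F (Matrix (Fin p) (Fin p) F))) :
    (K : Set (Matrix (Fin p) (Fin p) F)) =
      {B | ∃ c : Fin p → F, B = ∑ i : Fin p, c i • A ^ (i : ℕ)} ∧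
    (∀ x ∈ K, ∀ y ∈ K, x * y = y * x) ∧
    Module.finrank F (Submodule.span F (K : Set (Matrix (Fin p) (Fin p) F))) = p := by
  classical
  haveI : NeZero p := ⟨hp.ne_zero⟩
  set Ksub : Subalgebra F (Matrix (Fin p) (Fin p) F) := { K with algebraMap_mem' := hscalar } with hKsub
  have hmemK : ∀ x : Matrix (Fin p) (Fin p) F, x ∈ Ksub ↔ x ∈ K := fun x => Iff.rfl
  have hcanc : ∀ x ∈ K, ∀ y : Matrix (Fin p) (Fin p) F, x ≠ 0 → x * y = 0 → y = 0 := by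
    intro x hx y hx0 hxy
    obtain ⟨z, hz, hz1, hz2⟩ := hdiv x hx hx0
    calc y = (z * x) * y := by rw [hz2, one_mul]
    _ = z * (x * y) := by rw [mul_assoc]
    _ = 0 := by rw [hxy, mul_zero]
  haveI : Nontrivial Ksub := ⟨⟨0, 1, fun h => zero_ne_one (congrArg Subtype.val h)⟩⟩
  haveI : NoZeroDivisors Ksub := by
    constructor
    intro a b hab
    by_cases ha : a = 0
    · exact Or.inl ha
    · refine Or.inr (Subtype.ext ?_)
      have : (a : Matrix (Fin p) (Fin p) F) * (b : Matrix (Fin p) (Fin p) F) = 0 := by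
        have := congrArg Subtype.val hab; simpa using this
      exact hcanc a a.2 b (fun h => ha (Subtype.ext h)) this
  haveI : IsDomain Ksub := NoZeroDivisors.to_isDomain _
  have hAint : IsIntegral F A := Algebra.IsIntegral.isIntegral A
  set A' : Ksub := ⟨A, hA⟩ with hA'
  have hA'int : IsIntegral F A' :=
    (isIntegral_algHom_iff Ksub.val Subtype.val_injective).mp hAint
  have hirr : Irreducible (minpoly F A) := by
    have : minpoly F A = minpoly F A' :=
      minpoly.algHom_eq Ksub.val Subtype.val_injective A'
    rw [this]
    exact minpoly.irreducible hA'int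
  have hd2 : 2 ≤ (minpoly F A).natDegree :=
    (minpoly.two_le_natDegree_iff hAint).mpr (by simpa using hAs)
  have hdp : (minpoly F A).natDegree ≤ p := by
    have h1 : minpoly F A ∣ Matrix.charpoly A := Matrix.minpoly_dvd_charpoly A
    have := Polynomial.natDegree_le_of_dvd h1 (Matrix.charpoly_monic A).ne_zero
    rwa [Matrix.charpoly_natDegree_eq_dim, Fintype.card_fin] at this
  -- Part 2: d ∣ p via AdjoinRoot module structure on V = Fin p → F
  set m := minpoly F A with hm
  set d := m.natDegree with hd
  have hm0 : m ≠ 0 := minpoly.ne_zero hAint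
  haveI : Fact (Irreducible m) := ⟨hirr⟩
  set T : Module.End F (Fin p → F) := Matrix.toLinAlgEquiv' A with hT
  set θ : F[X] →ₐ[F] Module.End F (Fin p → F) := Polynomial.aeval T with hθ
  have hθm : ∀ q ∈ Ideal.span {m}, θ q = 0 := by
    intro q hq
    obtain ⟨r, rfl⟩ := Ideal.mem_span_singleton.mp hq
    have h1 : θ m = 0 := by
      have h := Polynomial.aeval_algHom_apply
        (Matrix.toLinAlgEquiv' (R := F) (n := Fin p)).toAlgHom A m
      change Polynomial.aeval (Matrix.toLinAlgEquiv' A) m = Matrix.toLinAlgEquiv' (Polynomial.aeval A m) at h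
      rw [hθ, hT, h]
      rw [show Polynomial.aeval A m = 0 from minpoly.aeval F A, map_zero]
    rw [map_mul, h1, zero_mul]
  set ψ : AdjoinRoot m →+* Module.End F (Fin p → F) :=
    Ideal.Quotient.lift (Ideal.span {m}) θ.toRingHom hθm with hψ
  letI : Module (AdjoinRoot m) (Fin p → F) := Module.compHom _ ψ
  haveI : IsScalarTower F (AdjoinRoot m) (Fin p → F) := by
    constructor
    intro c x v
    have h1 : ψ (c • x) = algebraMap F (Module.End F (Fin p → F)) c * ψ x := by
      rw [Algebra.smul_def, map_mul]
      congr 1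
      have h2 : algebraMap F (AdjoinRoot m) c = AdjoinRoot.mk m (Polynomial.C c) := by
        rw [AdjoinRoot.algebraMap_eq]; rfl
      rw [h2]
      show θ (Polynomial.C c) = _
      rw [hθ, Polynomial.aeval_C]
    show ψ (c • x) v = c • (ψ x v)
    rw [h1]
    rw [Module.End.mul_apply, Module.algebraMap_end_apply]
  have htower : Module.finrank F (AdjoinRoot m) * Module.finrank (AdjoinRoot m) (Fin p → F)
      = Module.finrank F (Fin p → F) := Module.finrank_mul_finrank F (AdjoinRoot m) (Fin p → F)
  have hV : Module.finrank F (Fin p → F) = p := by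
    rw [Module.finrank_pi]; exact Fintype.card_fin p
  have hL : Module.finrank F (AdjoinRoot m) = d := by
    rw [(AdjoinRoot.powerBasis hm0).finrank]; rfl
  have hdvd : d ∣ p := by
    have h5 : d * Module.finrank (AdjoinRoot m) (Fin p → F) = p := by
      rw [← hL, htower, hV]
    exact ⟨_, h5.symm⟩
  have hdeq : d = p := by
    rcases (Nat.Prime.eq_one_or_self_of_dvd hp d hdvd) with h | h
    · omega
    · exact h
  -- Part 3: linear independence of powers, dimension count
  have hli : LinearIndependent F (fun i : Fin p => A ^ (i : ℕ)) := by
    rw [Fintype.linearIndependent_iff]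
    intro g hg
    by_contra hne
    push_neg at hne
    obtain ⟨i0, hi0⟩ := hne
    set q : F[X] := ∑ i : Fin p, Polynomial.C (g i) * Polynomial.X ^ (i : ℕ) with hq
    have hqne : q ≠ 0 := by
      intro h0
      apply hi0
      have h6 := congrArg (fun r => Polynomial.coeff r (i0 : ℕ)) h0
      simp only [hq, Polynomial.finset_sum_coeff, Polynomial.coeff_C_mul,
        Polynomial.coeff_X_pow, Polynomial.coeff_zero, mul_ite, mul_one, mul_zero] at h6
      simp only [Fin.val_eq_val] at h6
      rwa [Finset.sum_ite_eq Finset.univ i0 g, if_pos (Finset.mem_univ i0)] at h6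
    have haq : Polynomial.aeval A q = 0 := by
      rw [hq]
      rw [map_sum]
      simpa [Algebra.smul_def] using hg
    have hdeg : q.degree < p := by
      apply lt_of_le_of_lt (Polynomial.degree_sum_le _ _)
      apply Finset.sup_lt_iff (by exact_mod_cast WithBot.bot_lt_coe p) |>.mpr
      intro i _
      have hb : ((Polynomial.C (g i)) * Polynomial.X ^ (i : ℕ)).degree ≤ ((i : ℕ) : WithBot ℕ) := by
        refine le_trans (Polynomial.degree_mul_le _ _) ?_
        rw [Polynomial.degree_X_pow]
        calc Polynomial.degree (Polynomial.C (g i)) + ((i : ℕ) : WithBot ℕ)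
            ≤ 0 + ((i : ℕ) : WithBot ℕ) := add_le_add_left Polynomial.degree_C_le _
          _ = _ := zero_add _
      refine lt_of_le_of_lt hb ?_
      exact_mod_cast i.isLt
    have := minpoly.degree_le_of_ne_zero F A hqne haq
    rw [← hm] at this
    have hmd : m.degree = (p : ℕ) := by
      rw [Polynomial.degree_eq_natDegree hm0, ← hd, hdeq]
    rw [hmd] at this
    exact absurd (lt_of_le_of_lt this hdeg) (lt_irrefl _)
  -- Part 3 (cont.): dimension count
  set M : Submodule F (Matrix (Fin p) (Fin p) F) :=
    Submodule.span F (Set.range fun i : Fin p => A ^ (i : ℕ)) with hM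
  have hMrank : Module.finrank F M = p := by
    rw [hM, finrank_span_eq_card hli, Fintype.card_fin]
  have hMK : M ≤ Subalgebra.toSubmodule Ksub := by
    rw [hM, Submodule.span_le]
    rintro x ⟨i, rfl⟩
    exact Ksub.pow_mem ((hmemK A).mpr hA) _
  let g : ↥(Subalgebra.toSubmodule Ksub) →ₗ[F] (Fin p → F) :=
    { toFun := fun x => (x : Matrix (Fin p) (Fin p) F) *ᵥ (fun _ => (1 : F))
      map_add' := by intro x y; simp [Matrix.add_mulVec]
      map_smul' := by intro c x; simp [Matrix.smul_mulVec] }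
  have hginj : Function.Injective g := by
    rw [injective_iff_map_eq_zero]
    intro x hx0
    have hx0' : (x : Matrix (Fin p) (Fin p) F) *ᵥ (fun _ => (1 : F)) = 0 := hx0
    by_contra hxne
    have hvalne : (x : Matrix (Fin p) (Fin p) F) ≠ 0 := fun h => hxne (Subtype.ext h)
    obtain ⟨y, hy, hy1, hy2⟩ := hdiv x x.2 hvalne
    have hz : ((fun _ => (1 : F)) : Fin p → F) = 0 := by
      calc ((fun _ => (1 : F)) : Fin p → F)
          = (1 : Matrix (Fin p) (Fin p) F) *ᵥ (fun _ => (1 : F)) := (Matrix.one_mulVec _).symm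
        _ = (y * (x : Matrix (Fin p) (Fin p) F)) *ᵥ (fun _ => (1 : F)) := by rw [hy2]
        _ = y *ᵥ ((x : Matrix (Fin p) (Fin p) F) *ᵥ (fun _ => (1 : F))) := by
            rw [Matrix.mulVec_mulVec]
        _ = y *ᵥ 0 := by rw [hx0']
        _ = 0 := Matrix.mulVec_zero y
    exact one_ne_zero (congrFun hz ⟨0, hp.pos⟩)
  have hKrank : Module.finrank F (Subalgebra.toSubmodule Ksub) ≤ p := by
    have h8 := LinearMap.finrank_le_finrank_of_injective hginj
    rwa [hV] at h8
  have hMeq : M = Subalgebra.toSubmodule Ksub :=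
    Submodule.eq_of_le_of_finrank_le hMK (by rw [hMrank]; exact hKrank)
  have hmemM : ∀ B : Matrix (Fin p) (Fin p) F, B ∈ K ↔ B ∈ M := by
    intro B
    rw [hMeq]
    exact ((hmemK B).trans (Subalgebra.mem_toSubmodule Ksub)).symm.symm |>.symm.trans
      ((hmemK B)).symm |>.symm
  refine ⟨?_, ?_, ?_⟩
  · ext B
    simp only [SetLike.mem_coe, Set.mem_setOf_eq]
    constructor
    · intro hB
      obtain ⟨c, hc⟩ := (Submodule.mem_span_range_iff_exists_fun F).mp
        (hM ▸ (hmemM B).mp hB)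
      exact ⟨c, hc.symm⟩
    · rintro ⟨c, rfl⟩
      refine K.sum_mem ?_
      intro i _
      rw [Algebra.smul_def]
      exact K.mul_mem (hscalar (c i)) (K.pow_mem hA _)
  · have hrep : ∀ x : Matrix (Fin p) (Fin p) F, x ∈ K →
        ∃ qx : F[X], x = Polynomial.aeval A qx := by
      intro x hx
      obtain ⟨c, hc⟩ := (Submodule.mem_span_range_iff_exists_fun F).mp
        (hM ▸ (hmemM x).mp hx)
      refine ⟨∑ i : Fin p, Polynomial.C (c i) * Polynomial.X ^ (i : ℕ), ?_⟩
      rw [map_sum, ← hc]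
      refine Finset.sum_congr rfl fun i _ => ?_
      rw [map_mul, Polynomial.aeval_C, map_pow, Polynomial.aeval_X, ← Algebra.smul_def]
    intro x hx y hy
    obtain ⟨qx, rfl⟩ := hrep x hx
    obtain ⟨qy, rfl⟩ := hrep y hy
    rw [← map_mul, ← map_mul, mul_comm]
  · rw [show (K : Set (Matrix (Fin p) (Fin p) F))
        = ((Subalgebra.toSubmodule Ksub : Submodule F (Matrix (Fin p) (Fin p) F))
          : Set (Matrix (Fin p) (Fin p) F)) from rfl,
      Submodule.span_eq, ← hMeq]
    exact hMrank
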